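/- Let (X,d) be a compact metric space, r > 0, and let x, y ∈ X with d(x,y) < r. Choose ν with 0 < ν < r − d(x,y). Suppose c > 0 is the only local minimum of the distance function d in the interval [c, r). Then (x,y) ν-descends to a pair (x', y') with d(x', y') ≤ c; that is, there exist finite sequences x = x₁, …, x_p = x' and y = y₁, …, y_p = y' in X with d(x_j, x_{j+1}) < ν, d(y_j, y_{j+1}) < ν, d(x_j, y_j) ≤ d(x,y) for all j, and d(x', y') ≤ c. -/

import Mathlib

/-- The pair `(x, y)` ν-descends to `(x', y')`: there are equal-length finite ν-chains
from `x` to `x'` and from `y` to `y'` whose corresponding points are always at distance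
at most `dist x y`. -/
def Descends {X : Type*} [MetricSpace X] (ν : ℝ) (x y x' y' : X) : Prop :=
  ∃ (p : ℕ) (f g : Fin (p + 1) → X),
    f 0 = x ∧ g 0 = y ∧ f (Fin.last p) = x' ∧ g (Fin.last p) = y' ∧
    (∀ i : Fin p, dist (f i.castSucc) (f i.succ) < ν) ∧
    (∀ i : Fin p, dist (g i.castSucc) (g i.succ) < ν) ∧
    (∀ i : Fin (p + 1), dist (f i) (g i) ≤ dist x y)

/-- `m` is a local minimum value of the distance function of `X`: it is attained at a
pair `(a, b)` and `d ≥ m` on a neighborhood of `(a, b)` in `X × X`. -/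
def IsLocMinVal (X : Type*) [MetricSpace X] (m : ℝ) : Prop :=
  ∃ a b : X, dist a b = m ∧
    ∃ ε > 0, ∀ a' b' : X, dist a a' < ε → dist b b' < ε → m ≤ dist a' b'

lemma descends_refl {X : Type*} [MetricSpace X] (ν : ℝ) (x y : X) :
    Descends ν x y x y :=
  ⟨0, fun _ => x, fun _ => y, rfl, rfl, rfl, rfl,
    fun i => i.elim0, fun i => i.elim0, fun _ => le_refl _⟩

lemma descends_snoc {X : Type*} [MetricSpace X] {ν : ℝ} {x y u v u' v' : X}
    (h : Descends ν x y u v) (hu : dist u u' < ν) (hv : dist v v' < ν)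
    (hd : dist u' v' ≤ dist x y) : Descends ν x y u' v' := by
  obtain ⟨p, f, g, hf0, hg0, hfl, hgl, hfs, hgs, hfg⟩ := h
  refine ⟨p + 1, Fin.snoc f u', Fin.snoc g v', ?_, ?_, ?_, ?_, ?_, ?_, ?_⟩
  · have : (0 : Fin (p + 2)) = Fin.castSucc 0 := rfl
    rw [this, Fin.snoc_castSucc, hf0]
  · have : (0 : Fin (p + 2)) = Fin.castSucc 0 := rfl
    rw [this, Fin.snoc_castSucc, hg0]
  · simp [Fin.snoc_last]
  · simp [Fin.snoc_last]
  · intro i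
    by_cases hi : (i : ℕ) < p
    · have h1 : i.succ = Fin.castSucc ⟨(i : ℕ) + 1, by omega⟩ := by ext; simp
      have h2 : i.castSucc = Fin.castSucc i := rfl
      rw [h1, h2, Fin.snoc_castSucc, Fin.snoc_castSucc]
      have := hfs ⟨i, hi⟩
      convert this using 3 <;> ext <;> simp
    · have hie : i = Fin.last p := by ext; simp at hi ⊢; omega
      subst hie
      have h1 : (Fin.last p).succ = Fin.last (p + 1) := by ext; simp
      have h2 : (Fin.last p).castSucc = Fin.castSucc (Fin.last p) := rfl
      rw [h1, h2, Fin.snoc_castSucc, Fin.snoc_last, hfl]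
      exact hu
  · intro i
    by_cases hi : (i : ℕ) < p
    · have h1 : i.succ = Fin.castSucc ⟨(i : ℕ) + 1, by omega⟩ := by ext; simp
      have h2 : i.castSucc = Fin.castSucc i := rfl
      rw [h1, h2, Fin.snoc_castSucc, Fin.snoc_castSucc]
      have := hgs ⟨i, hi⟩
      convert this using 3 <;> ext <;> simp
    · have hie : i = Fin.last p := by ext; simp at hi ⊢; omega
      subst hie
      have h1 : (Fin.last p).succ = Fin.last (p + 1) := by ext; simp
      have h2 : (Fin.last p).castSucc = Fin.castSucc (Fin.last p) := rfl
      rw [h1, h2, Fin.snoc_castSucc, Fin.snoc_last, hgl]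
      exact hv
  · intro i
    by_cases hi : (i : ℕ) < p + 1
    · have h1 : i = Fin.castSucc ⟨(i : ℕ), hi⟩ := by ext; simp
      rw [h1, Fin.snoc_castSucc, Fin.snoc_castSucc]
      exact hfg _
    · have h1 : i = Fin.last (p + 1) := by ext; simp at hi ⊢; omega
      rw [h1, Fin.snoc_last, Fin.snoc_last]
      exact hd

/-- Descending Lemma, part 1a: if `c > 0` is the only local minimum value
of `d` in `[c, r)`, then any pair at distance `< r` ν-descends (for `0 < ν < r - d(x,y)`)
to a pair at distance at most `c`. -/
theorem stmt_4 {X : Type*} [MetricSpace X] [CompactSpace X] (r : ℝ) (hr : 0 < r)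
    (x y : X) (hxy : dist x y < r) (ν : ℝ) (hν0 : 0 < ν) (hν : ν < r - dist x y)
    (c : ℝ) (hc0 : 0 < c) (hc : IsLocMinVal X c)
    (honly : ∀ m : ℝ, c < m → m < r → ¬ IsLocMinVal X m) :
    ∃ x' y' : X, Descends ν x y x' y' ∧ dist x' y' ≤ c := by
  set S : Set ℝ := {t | ∃ u v : X, Descends ν x y u v ∧ dist u v = t} with hS
  have hne : (dist x y) ∈ S := ⟨x, y, descends_refl ν x y, rfl⟩
  have hbdd : BddBelow S := ⟨0, fun t ⟨u, v, _, ht⟩ => ht ▸ dist_nonneg⟩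
  set m := sInf S with hm
  have hmD : m ≤ dist x y := csInf_le hbdd hne
  -- sequence approaching the infimum
  have hseq : ∀ n : ℕ, ∃ uv : X × X, Descends ν x y uv.1 uv.2 ∧
      dist uv.1 uv.2 < m + 1 / (n + 1) := by
    intro n
    have hpos : (0 : ℝ) < 1 / ((n : ℝ) + 1) := by positivity
    obtain ⟨t, ⟨u, v, hd, ht⟩, hlt⟩ :=
      Real.lt_sInf_add_pos ⟨_, hne⟩ hpos
    exact ⟨(u, v), hd, by rw [ht]; exact hlt⟩
  choose w hw1 hw2 using hseq
  obtain ⟨ab, -, φ, hφ, hlim⟩ :=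
    (isCompact_univ : IsCompact (Set.univ : Set (X × X))).tendsto_subseq
      (fun n => Set.mem_univ (w n))
  obtain ⟨a, b⟩ := ab
  have hlim1 : Filter.Tendsto (fun n => (w (φ n)).1) Filter.atTop (nhds a) :=
    (continuous_fst.tendsto _).comp hlim
  have hlim2 : Filter.Tendsto (fun n => (w (φ n)).2) Filter.atTop (nhds b) :=
    (continuous_snd.tendsto _).comp hlim
  have hdlim : Filter.Tendsto (fun n => dist (w (φ n)).1 (w (φ n)).2)
      Filter.atTop (nhds (dist a b)) := hlim1.dist hlim2
  -- dist a b = m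
  have hub : ∀ n, m ≤ dist (w (φ n)).1 (w (φ n)).2 := fun n =>
    csInf_le hbdd ⟨_, _, hw1 (φ n), rfl⟩
  have hab : dist a b = m := by
    have h1 : m ≤ dist a b := le_of_tendsto_of_tendsto' tendsto_const_nhds hdlim hub
    have h2 : dist a b ≤ m := by
      have hbound : ∀ n : ℕ, dist (w (φ n)).1 (w (φ n)).2 ≤ m + 1 / ((n : ℝ) + 1) := by
        intro n
        refine (hw2 (φ n)).le.trans (add_le_add (le_refl m) ?_)
        apply one_div_le_one_div_of_le (by positivity)
        have : n ≤ φ n := hφ.le_apply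
        exact_mod_cast Nat.succ_le_succ this
      have hto : Filter.Tendsto (fun n : ℕ => m + 1 / ((n : ℝ) + 1)) Filter.atTop
          (nhds (m + 0)) :=
        tendsto_const_nhds.add tendsto_one_div_add_atTop_nhds_zero_nat
      rw [add_zero] at hto
      exact le_of_tendsto_of_tendsto' hdlim hto hbound
    linarith
  -- (a, b) is reachable
  have hreach : Descends ν x y a b := by
    obtain ⟨N1, hN1⟩ := Metric.tendsto_atTop.mp hlim1 ν hν0
    obtain ⟨N2, hN2⟩ := Metric.tendsto_atTop.mp hlim2 ν hν0
    have hn1 := hN1 (max N1 N2) (le_max_left _ _)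
    have hn2 := hN2 (max N1 N2) (le_max_right _ _)
    set n := max N1 N2
    exact descends_snoc (hw1 (φ n)) hn1 hn2 (hab ▸ hmD)
  -- m ≤ c
  have hmc : m ≤ c := by
    by_contra hcm
    push_neg at hcm
    refine honly m hcm (lt_of_le_of_lt hmD hxy) ⟨a, b, hab, ν, hν0, ?_⟩
    intro a' b' ha' hb'
    by_contra hlt
    push_neg at hlt
    have : Descends ν x y a' b' :=
      descends_snoc hreach ha' hb' (le_trans hlt.le hmD)
    exact absurd (csInf_le hbdd ⟨a', b', this, rfl⟩) (not_le.mpr hlt)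
  exact ⟨a, b, hreach, hab ▸ hmc⟩
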